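/- In the ring of symmetric functions (or polynomials in n variables), for a prime p the truncated complete symmetric functions satisfy h'_r = Σ_{i≥0} (-1)^i F^p(e_i) · h_{r-ip}, where F^p(e_i) denotes the i-th elementary symmetric polynomial evaluated at x₁^p,...,x_n^p, h_d is the complete symmetric polynomial, and h'_r = Σ_{a₁+⋯+a_n=r, 0≤a_i<p} x₁^{a₁}⋯x_n^{a_n}. -/

import Mathlib

open MvPolynomial

/-- The complete homogeneous symmetric polynomial `h_d` in `n` variables. -/
noncomputable def fullH (n d : ℕ) : MvPolynomial (Fin n) ℤ :=
  ∑ s ∈ (Fintype.piFinset fun _ : Fin n => Finset.range (d + 1)).filter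
      (fun s => ∑ i, s i = d),
    ∏ i, X i ^ s i

/-- The `p`-truncated complete symmetric polynomial
`h'_r = Σ_{a₁+⋯+a_n=r, 0 ≤ aᵢ < p} x₁^{a₁}⋯x_n^{a_n}`. -/
noncomputable def truncH (n p r : ℕ) : MvPolynomial (Fin n) ℤ :=
  ∑ s ∈ (Fintype.piFinset fun _ : Fin n => Finset.range p).filter
      (fun s => ∑ i, s i = r),
    ∏ i, X i ^ s i

/-- The elementary symmetric polynomial `e_i` in `n` variables. -/
noncomputable def elemE (n i : ℕ) : MvPolynomial (Fin n) ℤ :=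
  ∑ s ∈ Finset.powersetCard i (Finset.univ : Finset (Fin n)), ∏ j ∈ s, X j

/-- The Frobenius substitution `F^p`, replacing each variable `xⱼ` by `xⱼ^p`. -/
noncomputable def frobSub (n p : ℕ) (f : MvPolynomial (Fin n) ℤ) : MvPolynomial (Fin n) ℤ :=
  MvPolynomial.aeval (fun j : Fin n => (X j : MvPolynomial (Fin n) ℤ) ^ p) f

lemma prodX {n : ℕ} (s : Fin n → ℕ) :
    (∏ i, (X i : MvPolynomial (Fin n) ℤ) ^ s i) =
      monomial (Finsupp.equivFunOnFinite.symm s) 1 := by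
  rw [← prod_X_pow_eq_monomial]
  refine (Finset.prod_subset (Finset.subset_univ _) ?_).symm
  intro x _ hx
  simp only [Finsupp.mem_support_iff, not_not] at hx
  simp only [Finsupp.coe_equivFunOnFinite_symm] at hx ⊢
  rw [hx, pow_zero]

lemma coeff_sum_mono {n : ℕ} (A : Finset (Fin n → ℕ)) (m : Fin n →₀ ℕ) :
    coeff m (∑ s ∈ A, (monomial (Finsupp.equivFunOnFinite.symm s) (1:ℤ))) =
      if ⇑m ∈ A then 1 else 0 := by
  rw [coeff_sum]
  simp only [coeff_monomial]
  have key : ∀ s : Fin n → ℕ, (Finsupp.equivFunOnFinite.symm s = m) ↔ s = ⇑m := by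
    intro s; rw [Equiv.symm_apply_eq]; rfl
  simp only [key]
  rw [Finset.sum_ite_eq' A (⇑m) (fun _ => (1:ℤ))]

lemma coeff_truncH {n p r : ℕ} (m : Fin n →₀ ℕ) :
    coeff m (truncH n p r) = if (∀ i, m i < p) ∧ (∑ i, m i = r) then 1 else 0 := by
  unfold truncH
  simp only [prodX]
  rw [coeff_sum_mono]
  congr 1
  simp [Fintype.mem_piFinset]

lemma coeff_fullH {n d : ℕ} (m : Fin n →₀ ℕ) :
    coeff m (fullH n d) = if (∑ i, m i = d) then 1 else 0 := by
  unfold fullH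
  simp only [prodX]
  rw [coeff_sum_mono]
  congr 1
  simp only [Finset.mem_filter, Fintype.mem_piFinset, Finset.mem_range, eq_iff_iff]
  constructor
  · exact fun h => h.2
  · intro h
    refine ⟨fun i => ?_, h⟩
    have : m i ≤ ∑ j, m j := Finset.single_le_sum (fun j _ => Nat.zero_le _) (Finset.mem_univ i)
    omega

/-- The characteristic finsupp of a set, with value `p` on the set. -/
noncomputable def chi {n : ℕ} (p : ℕ) (S : Finset (Fin n)) : Fin n →₀ ℕ :=
  Finsupp.equivFunOnFinite.symm (fun j => if j ∈ S then p else 0)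

lemma chi_apply {n : ℕ} (p : ℕ) (S : Finset (Fin n)) (j : Fin n) :
    chi p S j = if j ∈ S then p else 0 := rfl

lemma chi_sum {n : ℕ} (p : ℕ) (S : Finset (Fin n)) : ∑ j, chi p S j = S.card * p := by
  simp only [chi_apply]
  rw [Finset.sum_ite_mem, Finset.univ_inter, Finset.sum_const, smul_eq_mul]

lemma chi_le_iff {n : ℕ} (p : ℕ) (S : Finset (Fin n)) (m : Fin n →₀ ℕ) :
    chi p S ≤ m ↔ ∀ j ∈ S, p ≤ m j := by
  rw [Finsupp.le_def]
  constructor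
  · intro h j hj
    have := h j
    rwa [chi_apply, if_pos hj] at this
  · intro h j
    rw [chi_apply]
    split_ifs with hj
    · exact h j hj
    · exact Nat.zero_le _

lemma frob_elemE {n p i : ℕ} :
    frobSub n p (elemE n i) =
      ∑ S ∈ Finset.powersetCard i (Finset.univ : Finset (Fin n)),
        monomial (chi p S) (1:ℤ) := by
  unfold frobSub elemE
  rw [map_sum]
  refine Finset.sum_congr rfl fun S _ => ?_
  rw [map_prod]
  simp only [aeval_X]
  unfold chi
  rw [← prodX]
  have : ∀ j ∈ S, (X j : MvPolynomial (Fin n) ℤ) ^ p = X j ^ (if j ∈ S then p else 0) := by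
    intro j hj; rw [if_pos hj]
  rw [Finset.prod_congr rfl this]
  refine Finset.prod_subset (Finset.subset_univ _) ?_
  intro x _ hx
  simp [hx]

lemma sum_sub {n : ℕ} (m c : Fin n →₀ ℕ) (h : c ≤ m) :
    ∑ j, (m - c) j = (∑ j, m j) - (∑ j, c j) := by
  rw [Finsupp.le_def] at h
  have h1 : ∀ j, (m - c) j = m j - c j := fun j => Finsupp.tsub_apply m c j
  simp only [h1]
  have h2 : (∑ j, c j) + (∑ j, (m j - c j)) = ∑ j, m j := by
    rw [← Finset.sum_add_distrib]
    exact Finset.sum_congr rfl fun j _ => by have := h j; omega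
  omega

lemma coeff_term {n p r i : ℕ} (m : Fin n →₀ ℕ) :
    coeff m (if i * p ≤ r then
        (-1 : MvPolynomial (Fin n) ℤ) ^ i * frobSub n p (elemE n i) * fullH n (r - i * p)
      else 0)
      = if ∑ j, m j = r then
          ((Finset.powersetCard i (Finset.univ.filter fun j => p ≤ m j)).card : ℤ) * (-1) ^ i
        else 0 := by
  set T : Finset (Fin n) := Finset.univ.filter fun j => p ≤ m j with hT
  have hsub : ∀ S : Finset (Fin n), S ∈ Finset.powersetCard i T → i * p ≤ ∑ j, m j := by
    intro S hS
    rw [Finset.mem_powersetCard] at hS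
    calc i * p = ∑ j ∈ S, p := by rw [Finset.sum_const, smul_eq_mul, hS.2, mul_comm]
    _ ≤ ∑ j ∈ S, m j := Finset.sum_le_sum fun j hj => by
        have := hS.1 hj; rw [hT, Finset.mem_filter] at this; exact this.2
    _ ≤ ∑ j, m j := Finset.sum_le_sum_of_subset (Finset.subset_univ S)
  by_cases hip : i * p ≤ r
  · rw [if_pos hip]
    have hneg : ((-1 : MvPolynomial (Fin n) ℤ) ^ i) = C ((-1 : ℤ) ^ i) := by
      rw [map_pow, map_neg, map_one]
    rw [mul_assoc, hneg, coeff_C_mul, frob_elemE, Finset.sum_mul, coeff_sum]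
    have hterm : ∀ S ∈ Finset.powersetCard i (Finset.univ : Finset (Fin n)),
        coeff m (monomial (chi p S) (1:ℤ) * fullH n (r - i * p)) =
          if chi p S ≤ m then (if (∑ j, m j) - i*p = r - i*p then (1:ℤ) else 0) else 0 := by
      intro S hS
      rw [coeff_monomial_mul']
      by_cases h1 : chi p S ≤ m
      · rw [if_pos h1, if_pos h1, one_mul, coeff_fullH]
        congr 1
        rw [sum_sub m (chi p S) h1, chi_sum, (Finset.mem_powersetCard.mp hS).2]
      · rw [if_neg h1, if_neg h1]
    rw [Finset.sum_congr rfl hterm]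
    by_cases hm : ∑ j, m j = r
    · rw [if_pos hm]
      have : ∀ S ∈ Finset.powersetCard i (Finset.univ : Finset (Fin n)),
          (if chi p S ≤ m then (if (∑ j, m j) - i*p = r - i*p then (1:ℤ) else 0) else 0) =
            if S ∈ Finset.powersetCard i T then (1:ℤ) else 0 := by
        intro S hS
        rw [hm, if_pos rfl]
        have h2 : (chi p S ≤ m) ↔ S ∈ Finset.powersetCard i T := by
          rw [chi_le_iff, Finset.mem_powersetCard]
          constructor
          · intro h
            refine ⟨fun j hj => ?_, (Finset.mem_powersetCard.mp hS).2⟩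
            rw [hT, Finset.mem_filter]
            exact ⟨Finset.mem_univ j, h j hj⟩
          · intro h j hj
            have := h.1 hj
            rw [hT, Finset.mem_filter] at this
            exact this.2
        simp only [h2]
      rw [Finset.sum_congr rfl this, Finset.sum_ite_mem, mul_comm]
      congr 2
      · rw [Finset.inter_eq_right.mpr]
        · simp
        · intro S hS
          rw [Finset.mem_powersetCard] at hS ⊢
          exact ⟨Finset.subset_univ S, hS.2⟩
    · rw [if_neg hm]
      rw [Finset.sum_eq_zero, mul_zero]
      intro S hS
      split_ifs with h1 h2
      · exfalso
        have hle : i * p ≤ ∑ j, m j := by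
          have : ∑ j, chi p S j ≤ ∑ j, m j :=
            Finset.sum_le_sum fun j _ => Finsupp.le_def.mp h1 j
          rwa [chi_sum, (Finset.mem_powersetCard.mp hS).2] at this
        omega
      · rfl
      · rfl
  · rw [if_neg hip, coeff_zero]
    by_cases hm : ∑ j, m j = r
    · rw [if_pos hm]
      have : Finset.powersetCard i T = ∅ := by
        rw [Finset.eq_empty_iff_forall_notMem]
        intro S hS
        exact hip (hm ▸ hsub S hS)
      rw [this, Finset.card_empty, Nat.cast_zero, zero_mul]
    · rw [if_neg hm]

/-- `h'_r = Σ_{i ≥ 0} (-1)^i F^p(e_i) · h_{r-ip}` in `ℤ[x₁,…,x_n]` (terms with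
`r - ip < 0` vanish since `h_d = 0` for `d < 0`, and `e_i = 0` for `i > n`). -/
theorem stmt_9 (n p r : ℕ) (hp : p.Prime) :
    truncH n p r =
      ∑ i ∈ Finset.range (n + 1),
        if i * p ≤ r then
          (-1 : MvPolynomial (Fin n) ℤ) ^ i * frobSub n p (elemE n i) * fullH n (r - i * p)
        else 0 := by
  ext m
  rw [coeff_truncH, coeff_sum, Finset.sum_congr rfl (fun i _ => coeff_term m)]
  by_cases hm : ∑ j, m j = r
  · simp only [if_pos hm]
    rw [if_congr (and_iff_left hm) rfl rfl]
    set T : Finset (Fin n) := Finset.univ.filter fun j => p ≤ m j with hT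
    have hcard : ∀ i, ((Finset.powersetCard i T).card : ℤ) * (-1) ^ i =
        ∑ S ∈ Finset.powersetCard i T, (-1 : ℤ) ^ S.card := by
      intro i
      rw [Finset.sum_congr rfl (fun S hS => by
        rw [(Finset.mem_powersetCard.mp hS).2]), Finset.sum_const, nsmul_eq_mul]
    rw [Finset.sum_congr rfl (fun i _ => hcard i)]
    have hfib : ∑ i ∈ Finset.range (n + 1), ∑ S ∈ Finset.powersetCard i T, (-1 : ℤ) ^ S.card =
        ∑ S ∈ T.powerset, (-1 : ℤ) ^ S.card := by
      rw [← Finset.sum_fiberwise_of_maps_to (g := Finset.card) (t := Finset.range (n + 1))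
        (fun S hS => by
          rw [Finset.mem_range, Nat.lt_succ_iff]
          exact le_trans (Finset.card_le_card (Finset.mem_powerset.mp hS))
            (le_trans (Finset.card_filter_le _ _) (by simp)))]
      refine Finset.sum_congr rfl fun i _ => ?_
      rw [← Finset.powersetCard_eq_filter]
    rw [hfib, Finset.sum_powerset_neg_one_pow_card]
    congr 1
    rw [hT, eq_iff_iff, Finset.filter_eq_empty_iff]
    simp only [Finset.mem_univ, true_implies, not_le]
  · simp only [if_neg hm, Finset.sum_const_zero]
    rw [if_neg (fun h => hm h.2)]
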